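/- arXiv:1606.04588 — 4 statements merged into one kernel-verified Lean document; each statement's English description precedes it below -/
import Mathlib

section
/- The dual Bernstein polynomials of degree N sum to the constant N+1: Σ_{j=0}^N ψ̃_j(x) = N+1 for all x. -/
open Finset



/-- The `i`-th Bernstein basis polynomial of degree `N` on `[0,1]`. -/
noncomputable def bernstein' (N i : ℕ) : ℝ → ℝ :=
  fun x => (N.choose i : ℝ) * x ^ i * (1 - x) ^ (N - i)

/-- The coefficients of the dual Bernstein polynomials in the Bernstein basis. -/
noncomputable def dualCoeff (N i j : ℕ) : ℝ :=
  ((-1 : ℝ) ^ (i + j) / ((N.choose i : ℝ) * (N.choose j : ℝ))) *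
    ∑ r ∈ range (min i j + 1),
      (2 * (r : ℝ) + 1) * ((N + r + 1).choose (N - i) : ℝ) * ((N - r).choose (N - i) : ℝ) *
        ((N + r + 1).choose (N - j) : ℝ) * ((N - r).choose (N - j) : ℝ)

/-- The `i`-th dual Bernstein polynomial of degree `N`. -/
noncomputable def dualBernstein (N i : ℕ) : ℝ → ℝ :=
  fun x => ∑ j ∈ range (N + 1), dualCoeff N i j * bernstein' N j x


lemma trin (n k r : ℕ) : n.choose k * (n - k).choose r = n.choose r * (n - r).choose k := by
  rcases le_or_gt (k + r) n with h | h
  · have h1 : k ≤ n := by omega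
    have h2 : r ≤ n - k := by omega
    have h3 : r ≤ n := by omega
    have h4 : k ≤ n - r := by omega
    have key : ∀ a b : ℕ, b ≤ n → a ≤ n - b →
        n.choose b * ((n-b).choose a) * (Nat.factorial b * Nat.factorial a * Nat.factorial (n - b - a)) = Nat.factorial n := by
      intro a b hb ha
      calc n.choose b * ((n-b).choose a) * (Nat.factorial b * Nat.factorial a * Nat.factorial (n - b - a))
          = (n.choose b * Nat.factorial b) * ((n-b).choose a * Nat.factorial a * Nat.factorial ((n-b) - a)) := by ring_nf
        _ = (n.choose b * Nat.factorial b) * Nat.factorial (n - b) := by rw [Nat.choose_mul_factorial_mul_factorial ha]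
        _ = n.choose b * Nat.factorial b * Nat.factorial (n-b) := by ring
        _ = Nat.factorial n := Nat.choose_mul_factorial_mul_factorial hb
    have e1 := key r k h1 h2
    have e2 := key k r h3 h4
    have hfac : Nat.factorial k * Nat.factorial r * Nat.factorial (n - k - r) = Nat.factorial r * Nat.factorial k * Nat.factorial (n - r - k) := by
      rw [Nat.sub_sub, Nat.sub_sub, Nat.add_comm k r]; ring
    have hpos : 0 < Nat.factorial k * Nat.factorial r * Nat.factorial (n - k - r) := by positivity
    apply Nat.eq_of_mul_eq_mul_right hpos
    rw [e1]; rw [hfac]; rw [e2]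
  · rcases le_or_gt k n with hk | hk
    · have : (n - k).choose r = 0 := Nat.choose_eq_zero_of_lt (by omega)
      rw [this, Nat.mul_zero]
      rcases le_or_gt r n with hr | hr
      · have : (n - r).choose k = 0 := Nat.choose_eq_zero_of_lt (by omega)
        rw [this, Nat.mul_zero]
      · rw [Nat.choose_eq_zero_of_lt hr, Nat.zero_mul]
    · rw [Nat.choose_eq_zero_of_lt hk, Nat.zero_mul]
      have : (n - r).choose k = 0 := Nat.choose_eq_zero_of_lt (by omega)
      rw [this, Nat.mul_zero]

lemma relR (n m : ℕ) : ((n:ℝ) + 1 - m) * (((n+1).choose m : ℕ) : ℝ)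
    = ((n:ℝ) + 1) * ((n.choose m : ℕ) : ℝ) := by
  rcases le_or_gt m (n+1) with h | h
  · have := Nat.choose_mul_succ_eq n m
    have hc := congrArg (Nat.cast (R := ℝ)) this
    push_cast [Nat.cast_sub h] at hc
    linarith [hc]
  · rw [Nat.choose_eq_zero_of_lt h, Nat.choose_eq_zero_of_lt (by omega)]
    simp

lemma sumG : ∀ (A n r : ℕ),
    ∑ k ∈ range (n+1), (-1:ℝ)^k * (A.choose k) * ((n + r - k).choose r)
      = if A ≤ r then (((n + r - A).choose n : ℕ) : ℝ)
        else (-1:ℝ)^n * ((A - r - 1).choose n) := by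
  intro A
  induction A with
  | zero =>
    intro n r
    have : ∀ k ∈ range (n+1), (-1:ℝ)^k * ((0:ℕ).choose k) * ((n + r - k).choose r)
        = if k = 0 then (((n + r).choose r : ℕ) : ℝ) else 0 := by
      intro k _
      rcases Nat.eq_zero_or_pos k with rfl | hk
      · simp
      · rw [if_neg (by omega), Nat.choose_eq_zero_of_lt hk]; simp
    rw [sum_congr rfl this, sum_ite_eq' (range (n+1)) 0 _]
    simp only [mem_range, Nat.succ_pos, if_pos, Nat.zero_le, Nat.sub_zero]
    norm_cast
    exact Nat.choose_symm_of_eq_add (Nat.add_comm n r)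
  | succ A ih =>
    intro n r
    induction n with
    | zero => simp
    | succ n _ =>
      have key : ∑ k ∈ range (n+1+1), (-1:ℝ)^k * ((A+1).choose k) * ((n+1 + r - k).choose r)
          = (∑ k ∈ range (n+1+1), (-1:ℝ)^k * (A.choose k) * ((n+1 + r - k).choose r))
            - ∑ k ∈ range (n+1), (-1:ℝ)^k * (A.choose k) * ((n + r - k).choose r) := by
        rw [Finset.sum_range_succ' (fun k => (-1:ℝ)^k * ((A+1).choose k) * ((n+1 + r - k).choose r)) (n+1),
            Finset.sum_range_succ' (fun k => (-1:ℝ)^k * ((A).choose k) * ((n+1 + r - k).choose r)) (n+1)]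
        have : ∀ i, (-1:ℝ)^(i+1) * ((A+1).choose (i+1)) * ((n+1 + r - (i+1)).choose r)
            = (-1:ℝ)^(i+1) * ((A).choose (i+1)) * ((n+1 + r - (i+1)).choose r)
              - (-1:ℝ)^i * ((A).choose i) * ((n + r - i).choose r) := by
          intro i
          have h1 : n + 1 + r - (i+1) = n + r - i := by omega
          rw [Nat.choose_succ_succ, h1]
          push_cast
          ring
        rw [Finset.sum_congr rfl (fun i _ => this i), Finset.sum_sub_distrib]
        simp [Nat.choose_zero_right]
        ring
      rw [key, ih (n+1) r, ih n r]
      rcases lt_trichotomy (A+1) r with h | h | h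
      · rw [if_pos (by omega), if_pos (by omega), if_pos (by omega)]
        have e1 : n + 1 + r - A = (n + r - A) + 1 := by omega
        have e2 : n + 1 + r - (A+1) = n + r - A := by omega
        rw [e1, e2, Nat.choose_succ_succ]
        push_cast; ring
      · -- A + 1 = r
        rw [if_pos (by omega), if_pos (by omega), if_pos (by omega)]
        have e1 : n + 1 + r - A = n + 2 := by omega
        have e2 : n + r - A = n + 1 := by omega
        have e3 : n + 1 + r - (A+1) = n + 1 := by omega
        rw [e1, e2, e3, Nat.choose_succ_self_right]
        simp [Nat.choose_self, Nat.choose_succ_self]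
      · rcases Nat.eq_or_lt_of_le (Nat.lt_succ_iff.mp h) with h' | h'
        · -- r = A
          rw [if_pos (show A ≤ r by omega), if_pos (show A ≤ r by omega),
            if_neg (show ¬ (A + 1 ≤ r) by omega)]
          have e1 : n + 1 + r - A = n + 1 := by omega
          have e2 : n + r - A = n := by omega
          have e3 : A + 1 - r - 1 = 0 := by omega
          rw [e1, e2, e3, Nat.choose_self, Nat.choose_self,
            Nat.choose_eq_zero_of_lt (by omega)]
          simp
        · -- r < A
          rw [if_neg (show ¬ (A ≤ r) by omega), if_neg (show ¬ (A ≤ r) by omega),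
            if_neg (show ¬ (A + 1 ≤ r) by omega)]
          have e1 : A - r - 1 = (A - r - 1) := rfl
          have e2 : A + 1 - r - 1 = (A - r - 1) + 1 := by omega
          rw [e2, Nat.choose_succ_succ]
          push_cast
          ring

noncomputable def tB (N m r : ℕ) : ℝ :=
  (2*(r:ℝ)+1) * (-1)^r * (((N+r+1).choose m : ℕ) : ℝ) * (((N-r).choose m : ℕ) : ℝ)

noncomputable def gB (N m r : ℕ) : ℝ :=
  (2*(N:ℝ)+3-m) * r * (-1)^(r+1) * (((N+r+1).choose m : ℕ) : ℝ) * (((N+1-r).choose m : ℕ) : ℝ)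

lemma star (N m r : ℕ) (hm1 : 1 ≤ m) (hmN : m ≤ N) :
    ((N:ℝ)+1-m) * tB (N+1) m r + ((N:ℝ)+2) * tB N m r = gB N m (r+1) - gB N m r := by
  have hP : (N+1) + r + 1 = N + r + 2 := by omega
  have hgQ : N + (r+1) + 1 = N + r + 2 := by omega
  have hgS : N + 1 - (r+1) = N - r := by omega
  have hmx : (m:ℝ) ≤ (N:ℝ) := by exact_mod_cast hmN
  have hr0 : (0:ℝ) ≤ (r:ℝ) := Nat.cast_nonneg r
  rw [tB, tB, gB, gB, hP, hgQ, hgS, show (N+1 : ℕ) - r = N + 1 - r from rfl]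
  rcases le_or_gt (r + m) N with hc1 | hc1
  · -- generic case
    have hxr : ((N - r : ℕ) : ℝ) = (N:ℝ) - r := Nat.cast_sub (by omega)
    have rel1 : ((N:ℝ)+r+2-m) * (((N+r+2).choose m : ℕ) : ℝ)
        = ((N:ℝ)+r+2) * (((N+r+1).choose m : ℕ) : ℝ) := by
      have h := relR (N+r+1) m
      rw [show N+r+1+1 = N+r+2 by omega] at h
      push_cast at h ⊢
      linarith [h]
    have rel2 : ((N:ℝ)-r+1-m) * (((N+1-r).choose m : ℕ) : ℝ)
        = ((N:ℝ)-r+1) * (((N-r).choose m : ℕ) : ℝ) := by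
      have h := relR (N-r) m
      rw [show N-r+1 = N+1-r by omega, hxr] at h
      exact h
    have hrm : (r:ℝ) + m ≤ (N:ℝ) := by exact_mod_cast hc1
    have d1 : ((N:ℝ)+r+2-m) > 0 := by linarith
    have d2 : ((N:ℝ)-r+1-m) > 0 := by linarith
    push_cast
    apply mul_left_cancel₀ (ne_of_gt d1)
    apply mul_left_cancel₀ (ne_of_gt d2)
    linear_combination
      ((-1:ℝ)^r * (((N:ℝ)+1-m)*(2*r+1)*((N:ℝ)-r+1-m)*(((N+1-r).choose m : ℕ) : ℝ)
        - (2*(N:ℝ)+3-m)*((r:ℝ)+1)*((N:ℝ)-r+1-m)*(((N-r).choose m : ℕ) : ℝ))) * rel1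
      + ((-1:ℝ)^r * ((((N:ℝ)+1-m)*(2*r+1)*((N:ℝ)+r+2)
        - (2*(N:ℝ)+3-m)*(r:ℝ)*((N:ℝ)+r+2-m)) * (((N+r+1).choose m : ℕ) : ℝ))) * rel2
  · rcases Nat.lt_or_ge N (r + m - 1) with hc2 | hc2
    · -- S = T = 0
      have hT : (N-r).choose m = 0 := Nat.choose_eq_zero_of_lt (by omega)
      have hS : (N+1-r).choose m = 0 := Nat.choose_eq_zero_of_lt (by omega)
      rw [hT, hS]
      push_cast
      ring
    · -- r = N + 1 - m
      have hr : r = N + 1 - m := by omega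
      have hT : (N-r).choose m = 0 := Nat.choose_eq_zero_of_lt (by omega)
      have hS : (N+1-r).choose m = 1 := by
        rw [show N+1-r = m by omega, Nat.choose_self]
      have hrho : (r:ℝ) = (N:ℝ) + 1 - m := by
        rw [hr, Nat.cast_sub (by omega : m ≤ N + 1)]
        push_cast; ring
      have rel1 : ((N:ℝ)+r+2-m) * (((N+r+2).choose m : ℕ) : ℝ)
          = ((N:ℝ)+r+2) * (((N+r+1).choose m : ℕ) : ℝ) := by
        have h := relR (N+r+1) m
        rw [show N+r+1+1 = N+r+2 by omega] at h
        push_cast at h ⊢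
        linarith [h]
      have d1 : ((N:ℝ)+r+2-m) > 0 := by rw [hrho]; linarith
      rw [hT, hS]
      push_cast
      apply mul_left_cancel₀ (ne_of_gt d1)
      rw [hrho] at rel1 ⊢
      linear_combination ((-1:ℝ)^r * ((N:ℝ)+1-m)*(2*((N:ℝ)+1-m)+1)) * rel1

lemma alt0 : ∀ N : ℕ, ∑ r ∈ range (N+1), (2*(r:ℝ)+1) * (-1)^r = (-1)^N * ((N:ℝ)+1) := by
  intro N
  induction N with
  | zero => simp
  | succ n ih =>
    rw [Finset.sum_range_succ, ih]
    push_cast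
    ring

lemma sumH (N m : ℕ) (hmN : m ≤ N) :
    ∑ r ∈ range (N+1), tB N m r = (-1)^(N-m) * ((N:ℝ)+1) * (N.choose m : ℕ) := by
  rcases Nat.eq_zero_or_pos m with rfl | hm1
  · have : ∀ r, tB N 0 r = (2*(r:ℝ)+1) * (-1)^r := by
      intro r
      rw [tB, Nat.choose_zero_right, Nat.choose_zero_right]
      push_cast; ring
    rw [Finset.sum_congr rfl (fun r _ => this r), alt0 N, Nat.sub_zero,
      Nat.choose_zero_right]
    push_cast; ring
  · induction N, hmN using Nat.le_induction with
    | base =>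
      rw [Finset.sum_range_succ' (tB m m) m]
      have hz : ∀ i ∈ range m, tB m m (i+1) = 0 := by
        intro i _
        rw [tB, Nat.choose_eq_zero_of_lt (show m - (i+1) < m by omega)]
        push_cast; ring
      rw [Finset.sum_congr rfl hz, Finset.sum_const, smul_zero]
      rw [tB]
      simp [Nat.choose_self, Nat.choose_succ_self_right]
    | succ N hN ih =>
      have hsum : ∑ r ∈ range (N+2),
          (((N:ℝ)+1-m) * tB (N+1) m r + ((N:ℝ)+2) * tB N m r)
          = gB N m (N+2) - gB N m 0 := by
        rw [Finset.sum_congr rfl (fun r _ => star N m r hm1 hN),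
          Finset.sum_range_sub (gB N m)]
      have hg0 : gB N m 0 = 0 := by rw [gB]; push_cast; ring
      have hgT : gB N m (N+2) = 0 := by
        rw [gB, show N+1-(N+2) = 0 by omega, Nat.choose_eq_zero_of_lt hm1]
        push_cast; ring
      rw [hg0, hgT, sub_zero] at hsum
      rw [Finset.sum_add_distrib, ← Finset.mul_sum, ← Finset.mul_sum] at hsum
      have hext : ∑ r ∈ range (N+2), tB N m r = ∑ r ∈ range (N+1), tB N m r := by
        rw [Finset.sum_range_succ, tB, show N - (N+1) = 0 by omega,
          Nat.choose_eq_zero_of_lt hm1]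
        push_cast; ring
      rw [hext, ih] at hsum
      have d : ((N:ℝ)+1-m) > 0 := by
        have : (m:ℝ) ≤ N := by exact_mod_cast hN
        linarith
      have key : ((N:ℝ)+1-m) * (∑ r ∈ range (N+1+1), tB (N+1) m r)
          = -(((N:ℝ)+2) * ((-1)^(N-m) * ((N:ℝ)+1) * (N.choose m : ℕ))) := by
        linarith [hsum]
      rw [show N+1-m = (N-m)+1 by omega, pow_succ]
      apply mul_left_cancel₀ (ne_of_gt d)
      rw [key]
      push_cast
      linear_combination ((-1:ℝ)^(N-m) * ((N:ℝ)+2)) * relR N m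

lemma negpow {k N : ℕ} (h : k ≤ N) : (-1:ℝ)^(N-k) = (-1)^N * (-1)^k := by
  have h1 : N - k + k = N := by omega
  have h2 : (-1:ℝ)^k * (-1)^k = 1 := by
    rw [← pow_add, ← two_mul, pow_mul]; norm_num
  calc (-1:ℝ)^(N-k) = (-1:ℝ)^(N-k) * ((-1:ℝ)^k * (-1)^k) := by rw [h2, mul_one]
    _ = ((-1:ℝ)^(N-k) * (-1:ℝ)^k) * (-1)^k := by ring
    _ = (-1:ℝ)^N * (-1)^k := by rw [← pow_add, h1]

lemma innerA (N r : ℕ) (hr : r ≤ N) :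
    ∑ i ∈ range (N+1), (-1:ℝ)^i * (((N+r+1).choose (N-i) : ℕ) : ℝ)
      * (((N-r).choose (N-i) : ℕ) : ℝ) / ((N.choose i : ℕ) : ℝ) = (-1)^r := by
  have hCr : (0:ℝ) < ((N.choose r : ℕ) : ℝ) := by
    exact_mod_cast Nat.choose_pos hr
  have step1 : ∀ i ∈ range (N+1),
      (-1:ℝ)^i * (((N+r+1).choose (N-i) : ℕ) : ℝ) * (((N-r).choose (N-i) : ℕ) : ℝ)
        / ((N.choose i : ℕ) : ℝ)
      = ((-1:ℝ)^i * (((N+r+1).choose (N-i) : ℕ) : ℝ) * ((i.choose r : ℕ) : ℝ))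
        / ((N.choose r : ℕ) : ℝ) := by
    intro i hi
    have hiN : i ≤ N := by simpa [Nat.lt_succ_iff] using mem_range.mp hi
    have hCi : (0:ℝ) < ((N.choose i : ℕ) : ℝ) := by
      exact_mod_cast Nat.choose_pos hiN
    have htrin := trin N (N-i) r
    rw [show N - (N-i) = i by omega, Nat.choose_symm hiN] at htrin
    -- htrin : N.choose i * i.choose r = N.choose r * (N-r).choose (N-i)
    have hreal : ((N.choose i : ℕ) : ℝ) * ((i.choose r : ℕ) : ℝ)
        = ((N.choose r : ℕ) : ℝ) * (((N-r).choose (N-i) : ℕ) : ℝ) := by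
      exact_mod_cast congrArg (Nat.cast (R := ℝ)) htrin
    rw [div_eq_div_iff (ne_of_gt hCi) (ne_of_gt hCr)]
    linear_combination (-(-1:ℝ)^i * (((N+r+1).choose (N-i) : ℕ) : ℝ)) * hreal
  rw [Finset.sum_congr rfl step1, ← Finset.sum_div]
  have step2 : ∑ i ∈ range (N+1),
      (-1:ℝ)^i * (((N+r+1).choose (N-i) : ℕ) : ℝ) * ((i.choose r : ℕ) : ℝ)
      = (-1:ℝ)^N * ∑ k ∈ range (N+1),
          (-1:ℝ)^k * (((N+r+1).choose k : ℕ) : ℝ) * (((N-k).choose r : ℕ) : ℝ) := by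
    rw [← Finset.sum_range_reflect
      (fun i => (-1:ℝ)^i * (((N+r+1).choose (N-i) : ℕ) : ℝ) * ((i.choose r : ℕ) : ℝ)) (N+1),
      Finset.mul_sum]
    apply Finset.sum_congr rfl
    intro k hk
    have hkN : k ≤ N := by simpa [Nat.lt_succ_iff] using mem_range.mp hk
    rw [show N + 1 - 1 - k = N - k by omega, show N - (N - k) = k by omega,
      negpow hkN]
    ring
  rw [step2]
  have step3 : ∑ k ∈ range (N+1),
      (-1:ℝ)^k * (((N+r+1).choose k : ℕ) : ℝ) * (((N-k).choose r : ℕ) : ℝ)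
      = ∑ k ∈ range (N-r+1),
          (-1:ℝ)^k * (((N+r+1).choose k : ℕ) : ℝ) * (((N-r) + r - k).choose r : ℕ) := by
    rw [← Finset.sum_subset (Finset.range_subset_range.mpr (by omega : N-r+1 ≤ N+1))]
    · apply Finset.sum_congr rfl
      intro k hk
      rw [show N - r + r - k = N - k by omega]
    · intro k hk hk2
      rw [mem_range] at hk hk2
      rw [Nat.choose_eq_zero_of_lt (show N - k < r by omega)]
      push_cast; ring
  rw [step3, sumG (N+r+1) (N-r) r, if_neg (by omega),
    show N + r + 1 - r - 1 = N by omega, Nat.choose_symm hr, negpow hr]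
  have h2 : ((-1:ℝ)^N) * ((-1:ℝ)^N) = 1 := by
    rw [← pow_add, ← two_mul, pow_mul]; norm_num
  rw [div_eq_iff (ne_of_gt hCr)]
  linear_combination ((-1:ℝ)^r * ((N.choose r : ℕ) : ℝ)) * h2

lemma sumDC (N j : ℕ) (hj : j ≤ N) :
    ∑ i ∈ range (N+1), dualCoeff N i j = (N:ℝ) + 1 := by
  have hCj : (0:ℝ) < ((N.choose j : ℕ) : ℝ) := by
    exact_mod_cast Nat.choose_pos hj
  have extend : ∀ i ∈ range (N+1), dualCoeff N i j
      = ((-1 : ℝ) ^ (i + j) / ((N.choose i : ℝ) * (N.choose j : ℝ))) *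
        ∑ r ∈ range (N + 1),
          (2 * (r : ℝ) + 1) * ((N + r + 1).choose (N - i) : ℝ) * ((N - r).choose (N - i) : ℝ) *
            ((N + r + 1).choose (N - j) : ℝ) * ((N - r).choose (N - j) : ℝ) := by
    intro i hi
    have hiN : i ≤ N := by simpa [Nat.lt_succ_iff] using mem_range.mp hi
    rw [dualCoeff]
    congr 1
    apply Finset.sum_subset (Finset.range_subset_range.mpr (by omega : min i j + 1 ≤ N + 1))
    intro r hr hr2
    rw [mem_range] at hr hr2
    have : i < r ∨ j < r := by omega
    rcases this with h | h
    · rw [Nat.choose_eq_zero_of_lt (show N - r < N - i by omega)]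
      push_cast; ring
    · rw [Nat.choose_eq_zero_of_lt (show N - r < N - j by omega)]
      push_cast; ring
  rw [Finset.sum_congr rfl extend]
  have swap : ∑ i ∈ range (N+1), ((-1 : ℝ) ^ (i + j) / ((N.choose i : ℝ) * (N.choose j : ℝ))) *
        ∑ r ∈ range (N + 1),
          (2 * (r : ℝ) + 1) * ((N + r + 1).choose (N - i) : ℝ) * ((N - r).choose (N - i) : ℝ) *
            ((N + r + 1).choose (N - j) : ℝ) * ((N - r).choose (N - j) : ℝ)
      = ∑ r ∈ range (N+1), ∑ i ∈ range (N+1),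
          ((-1 : ℝ) ^ (i + j) / ((N.choose i : ℝ) * (N.choose j : ℝ))) *
          ((2 * (r : ℝ) + 1) * ((N + r + 1).choose (N - i) : ℝ) * ((N - r).choose (N - i) : ℝ) *
            ((N + r + 1).choose (N - j) : ℝ) * ((N - r).choose (N - j) : ℝ)) := by
    rw [Finset.sum_comm]
    apply Finset.sum_congr rfl
    intro i _
    rw [Finset.mul_sum]
  rw [swap]
  have per_r : ∀ r ∈ range (N+1), ∑ i ∈ range (N+1),
        ((-1 : ℝ) ^ (i + j) / ((N.choose i : ℝ) * (N.choose j : ℝ))) *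
        ((2 * (r : ℝ) + 1) * ((N + r + 1).choose (N - i) : ℝ) * ((N - r).choose (N - i) : ℝ) *
          ((N + r + 1).choose (N - j) : ℝ) * ((N - r).choose (N - j) : ℝ))
      = ((-1:ℝ)^j / ((N.choose j : ℕ) : ℝ)) * tB N (N-j) r := by
    intro r hr
    have hrN : r ≤ N := by simpa [Nat.lt_succ_iff] using mem_range.mp hr
    have factor : ∀ i ∈ range (N+1),
        ((-1 : ℝ) ^ (i + j) / ((N.choose i : ℝ) * (N.choose j : ℝ))) *
        ((2 * (r : ℝ) + 1) * ((N + r + 1).choose (N - i) : ℝ) * ((N - r).choose (N - i) : ℝ) *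
          ((N + r + 1).choose (N - j) : ℝ) * ((N - r).choose (N - j) : ℝ))
        = (((-1:ℝ)^j / ((N.choose j : ℕ) : ℝ)) * ((2 * (r : ℝ) + 1) *
            ((N + r + 1).choose (N - j) : ℝ) * ((N - r).choose (N - j) : ℝ)))
          * ((-1:ℝ)^i * (((N+r+1).choose (N-i) : ℕ) : ℝ)
            * (((N-r).choose (N-i) : ℕ) : ℝ) / ((N.choose i : ℕ) : ℝ)) := by
      intro i _
      rw [pow_add]
      ring
    rw [Finset.sum_congr rfl factor, ← Finset.mul_sum, innerA N r hrN, tB]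
    ring
  rw [Finset.sum_congr rfl per_r, ← Finset.mul_sum, sumH N (N-j) (by omega),
    show N - (N - j) = j by omega, Nat.choose_symm hj]
  have h2 : ((-1:ℝ)^j) * ((-1:ℝ)^j) = 1 := by
    rw [← pow_add, ← two_mul, pow_mul]; norm_num
  rw [div_mul_eq_mul_div, div_eq_iff (ne_of_gt hCj)]
  linear_combination (((N:ℝ)+1) * ((N.choose j : ℕ) : ℝ)) * h2

lemma bernstein_partition (N : ℕ) (x : ℝ) :
    ∑ j ∈ range (N+1), bernstein' N j x = 1 := by
  have h := add_pow x (1-x) N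
  rw [show x + (1-x) = 1 by ring, one_pow] at h
  rw [show (1:ℝ) = ∑ k ∈ range (N + 1), x ^ k * (1-x) ^ (N - k) * ↑(N.choose k) from h]
  apply Finset.sum_congr rfl
  intro j _
  rw [bernstein']
  ring

theorem dualBernstein_sum (N : ℕ) (x : ℝ) :
    ∑ j ∈ range (N + 1), dualBernstein N j x = (N : ℝ) + 1 := by
  have expand : ∑ j ∈ range (N + 1), dualBernstein N j x
      = ∑ j' ∈ range (N+1), (∑ j ∈ range (N+1), dualCoeff N j j') * bernstein' N j' x := by
    simp only [dualBernstein]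
    rw [Finset.sum_comm]
    apply Finset.sum_congr rfl
    intro j' _
    rw [Finset.sum_mul]
  rw [expand]
  have hper : ∀ j' ∈ range (N+1),
      (∑ j ∈ range (N+1), dualCoeff N j j') * bernstein' N j' x
        = ((N:ℝ)+1) * bernstein' N j' x := by
    intro j' hj'
    rw [sumDC N j' (Nat.lt_succ_iff.mp (mem_range.mp hj'))]
  rw [Finset.sum_congr rfl hper, ← Finset.mul_sum, bernstein_partition, mul_one]
end

section
/- For the dual Bernstein polynomials of degree N and any p ≤ N, the p-th derivative at 0 is given by ψ̃_i^{(p)}(0) = (-1)^p N!/(N-p)! · Σ_{r=0}^p (-1)^r c_{i,r} C(p,r), where c_{i,r} are the dual basis coefficients. -/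
open Finset

open Polynomial in
private lemma iteratedDeriv_polyEval (P : ℝ[X]) (k : ℕ) :
    iteratedDeriv k (fun x => P.eval x) = fun x => (derivative^[k] P).eval x := by
  induction k with
  | zero => simp
  | succ k ih =>
    rw [iteratedDeriv_succ, ih, Function.iterate_succ_apply']
    funext x
    exact Polynomial.deriv (p := Polynomial.derivative^[k] P)

open Polynomial in
private lemma coeff_one_sub_X_pow (m k : ℕ) :
    ((1 - X : ℝ[X]) ^ m).coeff k = (-1 : ℝ) ^ k * (m.choose k : ℝ) := by
  have h : (1 - X : ℝ[X]) = (-1) * (X + C (-1)) := by ring_nf; simp [map_neg]; ring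
  rw [h, mul_pow, ← C_1, ← C_neg, ← C_pow, coeff_C_mul, coeff_X_add_C_pow]
  rcases le_or_gt k m with hkm | hkm
  · have : (-1 : ℝ) ^ m * (-1) ^ (m - k) = (-1) ^ k := by
      rw [← pow_add]
      have : m + (m - k) = k + 2 * (m - k) := by omega
      rw [this, pow_add, pow_mul]
      simp
    rw [← mul_assoc, this]
  · simp [Nat.choose_eq_zero_of_lt hkm]

theorem dualBernstein_iteratedDeriv_at_zero (N i p : ℕ) (hi : i ≤ N) (hp : p ≤ N) :
    iteratedDeriv p (dualBernstein N i) 0 =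
      (-1 : ℝ) ^ p * (N.factorial : ℝ) / ((N - p).factorial : ℝ) *
        ∑ r ∈ range (p + 1), (-1 : ℝ) ^ r * dualCoeff N i r * (p.choose r : ℝ) := by
  classical
  open Polynomial in
  set P : ℝ[X] := ∑ j ∈ range (N + 1),
      C (dualCoeff N i j * (N.choose j : ℝ)) * ((1 - X) ^ (N - j) * X ^ j) with hP
  have hfun : dualBernstein N i = fun x => P.eval x := by
    funext x
    simp [dualBernstein, bernstein', hP, eval_finset_sum]
    refine Finset.sum_congr rfl fun j _ => ?_
    ring
  -- coefficient of P at p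
  have hcoeff : P.coeff p =
      ∑ j ∈ range (p + 1),
        dualCoeff N i j * (N.choose j : ℝ) * ((-1 : ℝ) ^ (p - j) * ((N - j).choose (p - j) : ℝ)) := by
    rw [hP, finset_sum_coeff]
    rw [Finset.sum_congr rfl (fun j _ => by
      rw [coeff_C_mul, coeff_mul_X_pow'])]
    rw [← Finset.sum_subset (Finset.range_subset_range.2 (by omega : p + 1 ≤ N + 1))]
    · refine Finset.sum_congr rfl fun j hj => ?_
      have hj' : j ≤ p := by simpa [Nat.lt_succ_iff] using Finset.mem_range.mp hj
      rw [if_pos hj', coeff_one_sub_X_pow]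
    · intro j hj hj'
      have : ¬ j ≤ p := by
        simp only [Finset.mem_range, Nat.lt_succ_iff] at hj hj'
        omega
      rw [if_neg this, mul_zero]
  rw [hfun, iteratedDeriv_polyEval]
  have heval : (derivative^[p] P).eval 0 = (p.factorial : ℝ) * P.coeff p := by
    rw [← Polynomial.coeff_zero_eq_eval_zero, Polynomial.coeff_iterate_derivative]
    simp [Nat.descFactorial_self, nsmul_eq_mul]
  show (derivative^[p] P).eval 0 = _
  rw [heval, hcoeff, Finset.mul_sum, Finset.mul_sum]
  refine Finset.sum_congr rfl fun j hj => ?_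
  have hj' : j ≤ p := Nat.lt_succ_iff.mp (Finset.mem_range.mp hj)
  have keyN : p.factorial * (N.choose j) * ((N - j).choose (p - j)) * (N - p).factorial
      = N.factorial * p.choose j := by
    rw [mul_assoc p.factorial, ← Nat.choose_mul (n := N) hj',
      ← Nat.choose_mul_factorial_mul_factorial hp]
    ring
  have keyR : (p.factorial : ℝ) * (N.choose j : ℝ) * ((N - j).choose (p - j) : ℝ)
      * ((N - p).factorial : ℝ) = (N.factorial : ℝ) * (p.choose j : ℝ) := by
    exact_mod_cast congrArg (Nat.cast : ℕ → ℝ) keyN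
  have hsign : (-1 : ℝ) ^ p * (-1 : ℝ) ^ j = (-1 : ℝ) ^ (p - j) := by
    rw [← pow_add]
    have h : p + j = (p - j) + 2 * j := by omega
    rw [h, pow_add, pow_mul]
    simp
  have h0 : ((N - p).factorial : ℝ) ≠ 0 := Nat.cast_ne_zero.mpr (Nat.factorial_ne_zero _)
  field_simp
  linear_combination ((-1 : ℝ) ^ (p - j) * dualCoeff N i j) * keyR
    - ((N.factorial : ℝ) * (p.choose j : ℝ) * dualCoeff N i j) * hsign
end

section
/- Let n ≤ N. The Bernstein polynomials {φ_i : ⌊n/2⌋ ≤ i ≤ N - ⌊(n+1)/2⌋} form a basis for the space V_N^{0,n} of polynomials of degree ≤ N satisfying the homogeneous boundary conditions: v^{(p)}(0) = v^{(p)}(1) = 0 for 0 ≤ p ≤ (n-2)/2 when n is even; v^{(p)}(0) = v^{(p)}(1) = 0 for 0 ≤ p ≤ (n-3)/2 together with v^{((n-1)/2)}(1) = 0 when n is odd. -/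
open Polynomial

/-- The `i`-th Bernstein basis polynomial of degree `N`, as a polynomial. -/
noncomputable def bernsteinP (N i : ℕ) : Polynomial ℝ :=
  (N.choose i : ℝ) • (X ^ i * (1 - X) ^ (N - i))

/-- The homogeneous boundary conditions defining the trial space `V_N^{0,n}`:
for `n` even, `v⁽ᵖ⁾(0) = v⁽ᵖ⁾(1) = 0` for `0 ≤ p ≤ (n-2)/2`; for `n` odd, the same
for `0 ≤ p ≤ (n-3)/2` together with `v^((n-1)/2)(1) = 0`. -/
def trialBC (n : ℕ) (q : Polynomial ℝ) : Prop :=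
  if Even n then
    ∀ p, 2 * p + 2 ≤ n →
      ((fun r => derivative r)^[p] q).eval 0 = 0 ∧ ((fun r => derivative r)^[p] q).eval 1 = 0
  else
    (∀ p, 2 * p + 3 ≤ n →
      ((fun r => derivative r)^[p] q).eval 0 = 0 ∧ ((fun r => derivative r)^[p] q).eval 1 = 0) ∧
      ((fun r => derivative r)^[(n - 1) / 2] q).eval 1 = 0


lemma bern_eq (N i : ℕ) : bernsteinP N i = bernsteinPolynomial ℝ N i := by
  simp [bernsteinP, bernsteinPolynomial, Polynomial.smul_eq_C_mul, mul_assoc]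

noncomputable def Lmap (x : ℝ) (p : ℕ) : Polynomial ℝ →ₗ[ℝ] ℝ :=
  (Polynomial.leval x).comp ((Polynomial.derivative : Polynomial ℝ →ₗ[ℝ] Polynomial ℝ) ^ p)

lemma Lmap_apply (x : ℝ) (p : ℕ) (q : Polynomial ℝ) :
    Lmap x p q = ((fun r => derivative r)^[p] q).eval x := by
  simp [Lmap, Module.End.pow_apply, Polynomial.leval_apply]

lemma L0_eq_zero {N p ν : ℕ} (h : p < ν) : Lmap 0 p (bernsteinP N ν) = 0 := by
  rw [Lmap_apply, bern_eq]
  exact bernsteinPolynomial.iterate_derivative_at_0_eq_zero_of_lt ℝ N h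

lemma L0_ne_zero {N ν : ℕ} (h : ν ≤ N) : Lmap 0 ν (bernsteinP N ν) ≠ 0 := by
  rw [Lmap_apply, bern_eq]
  exact bernsteinPolynomial.iterate_derivative_at_0_ne_zero ℝ N ν h

lemma L1_eq_zero {N p ν : ℕ} (h : p < N - ν) : Lmap 1 p (bernsteinP N ν) = 0 := by
  rw [Lmap_apply, bern_eq]
  exact bernsteinPolynomial.iterate_derivative_at_1_eq_zero_of_lt ℝ N h

lemma L1_ne_zero {N ν : ℕ} (h : ν ≤ N) : Lmap 1 (N - ν) (bernsteinP N ν) ≠ 0 := by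
  rw [Lmap_apply, bern_eq]
  exact bernsteinPolynomial.iterate_derivative_at_1_ne_zero ℝ N ν h

lemma key0 (N m : ℕ) (hm : m ≤ N + 1) (c : ℕ → ℝ)
    (h : ∀ p < m, Lmap 0 p (∑ i ∈ Finset.range (N + 1), c i • bernsteinP N i) = 0) :
    ∀ i < m, c i = 0 := by
  intro i
  induction i using Nat.strong_induction_on with
  | _ i ih =>
    intro him
    have hz := h i him
    rw [map_sum, Finset.sum_eq_single_of_mem i (Finset.mem_range.2 (by omega))] at hz
    · rw [map_smul, smul_eq_mul] at hz
      exact (mul_eq_zero.1 hz).resolve_right (L0_ne_zero (by omega))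
    · intro j hj hji
      rw [map_smul, smul_eq_mul]
      rcases lt_or_gt_of_ne hji with hlt | hgt
      · rw [ih j hlt (by omega), zero_mul]
      · rw [L0_eq_zero hgt, mul_zero]

lemma key1 (N m : ℕ) (hm : m ≤ N + 1) (c : ℕ → ℝ)
    (h : ∀ p < m, Lmap 1 p (∑ i ∈ Finset.range (N + 1), c i • bernsteinP N i) = 0) :
    ∀ j < m, c (N - j) = 0 := by
  intro j
  induction j using Nat.strong_induction_on with
  | _ j ih =>
    intro hjm
    have hz := h j hjm
    rw [map_sum, Finset.sum_eq_single_of_mem (N - j) (Finset.mem_range.2 (by omega))] at hz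
    · rw [map_smul, smul_eq_mul] at hz
      have hne := L1_ne_zero (N := N) (ν := N - j) (by omega)
      rw [show N - (N - j) = j by omega] at hne
      exact (mul_eq_zero.1 hz).resolve_right hne
    · intro i hi hine
      rw [map_smul, smul_eq_mul]
      have hiN : i ≤ N := Nat.lt_succ_iff.mp (Finset.mem_range.1 hi)
      rcases lt_or_gt_of_ne hine with hlt | hgt
      · rw [L1_eq_zero (by omega), mul_zero]
      · have hc := ih (N - i) (by omega) (by omega)
        rw [show N - (N - i) = i by omega] at hc
        rw [hc, zero_mul]

lemma linIndepFull (N : ℕ) : LinearIndependent ℝ (fun i : Fin (N + 1) => bernsteinP N i) := by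
  rw [Fintype.linearIndependent_iff]
  intro c hc i
  classical
  set c' : ℕ → ℝ := fun i => if h : i < N + 1 then c ⟨i, h⟩ else 0 with hc'
  have hsum : ∑ i ∈ Finset.range (N + 1), c' i • bernsteinP N i = 0 := by
    rw [← Fin.sum_univ_eq_sum_range (fun i => c' i • bernsteinP N i) (N + 1)]
    rw [← hc]
    exact Finset.sum_congr rfl fun i _ => by simp [hc', i.isLt, i.is_le]
  have := key0 N (N + 1) le_rfl c' (fun p _ => by rw [hsum, map_zero]) i i.isLt
  simpa [hc', i.isLt, i.is_le] using this

lemma bern_degree_le (N i : ℕ) : (bernsteinP N i).degree ≤ (N : WithBot ℕ) := by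
  rcases Nat.lt_or_ge N i with hi | hi
  · simp [bernsteinP, Nat.choose_eq_zero_of_lt hi]
  have h1 : (bernsteinP N i).natDegree ≤ N := by
    refine le_trans (natDegree_smul_le _ _) (le_trans (natDegree_mul_le) ?_)
    have h2 : ((1 - X : Polynomial ℝ) ^ (N - i)).natDegree ≤ (N - i) * 1 :=
      le_trans natDegree_pow_le
        (Nat.mul_le_mul_left _ (le_trans (natDegree_sub_le _ _) (by simp)))
    have h3 : ((X : Polynomial ℝ) ^ i).natDegree = i := natDegree_X_pow i
    omega
  exact le_trans (degree_le_natDegree) (by exact_mod_cast h1)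

lemma mem_span_full {N : ℕ} {q : Polynomial ℝ} (hq : q.degree ≤ (N : WithBot ℕ)) :
    ∃ c : ℕ → ℝ, q = ∑ i ∈ Finset.range (N + 1), c i • bernsteinP N i := by
  classical
  have hltN : ∀ r : Polynomial ℝ, r.degree ≤ (N : WithBot ℕ) → r ∈ degreeLT ℝ (N + 1) := by
    intro r hr
    exact mem_degreeLT.2 (lt_of_le_of_lt hr (by exact_mod_cast Nat.lt_succ_self N))
  set v : Fin (N + 1) → degreeLT ℝ (N + 1) :=
    fun i => ⟨bernsteinP N i, hltN _ (bern_degree_le N i)⟩ with hv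
  have hvi : LinearIndependent ℝ v := by
    apply LinearIndependent.of_comp (Submodule.subtype _)
    exact linIndepFull N
  have hcard : Fintype.card (Fin (N + 1)) = Module.finrank ℝ (degreeLT ℝ (N + 1)) := by
    rw [Fintype.card_fin, (Polynomial.degreeLTEquiv ℝ (N + 1)).finrank_eq,
      Module.finrank_fin_fun]
  have hspan := hvi.span_eq_top_of_card_eq_finrank hcard
  have hqmem : (⟨q, hltN q hq⟩ : degreeLT ℝ (N + 1)) ∈ Submodule.span ℝ (Set.range v) := by
    rw [hspan]; trivial
  rw [Submodule.mem_span_range_iff_exists_fun] at hqmem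
  obtain ⟨c, hc⟩ := hqmem
  refine ⟨fun i => if h : i < N + 1 then c ⟨i, h⟩ else 0, ?_⟩
  have hc' := congrArg (Subtype.val) hc
  simp only [hv] at hc'
  rw [← hc']
  rw [← Fin.sum_univ_eq_sum_range
    (fun i => (if h : i < N + 1 then c ⟨i, h⟩ else 0) • bernsteinP N i) (N + 1)]
  push_cast
  refine (Finset.sum_congr rfl fun i _ => by simp [i.isLt]).symm


lemma trialBC_iff (n : ℕ) (q : Polynomial ℝ) :
    trialBC n q ↔ (∀ p < n / 2, Lmap 0 p q = 0) ∧ (∀ p < (n + 1) / 2, Lmap 1 p q = 0) := by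
  unfold trialBC
  simp only [Lmap_apply]
  split_ifs with h
  · obtain ⟨m, rfl⟩ := h
    constructor
    · intro H
      exact ⟨fun p hp => (H p (by omega)).1, fun p hp => (H p (by omega)).2⟩
    · rintro ⟨H0, H1⟩ p hp
      exact ⟨H0 p (by omega), H1 p (by omega)⟩
  · obtain ⟨m, rfl⟩ := Nat.not_even_iff_odd.1 h
    constructor
    · rintro ⟨H, He⟩
      refine ⟨fun p hp => (H p (by omega)).1, fun p hp => ?_⟩
      rcases Nat.lt_or_ge p m with hpm | hpm
      · exact (H p (by omega)).2
      · have : p = (2 * m + 1 - 1) / 2 := by omega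
        rw [this]; exact He
    · rintro ⟨H0, H1⟩
      exact ⟨fun p hp => ⟨H0 p (by omega), H1 p (by omega)⟩, H1 _ (by omega)⟩

theorem bernstein_basis_of_trial_space (N n : ℕ) (hn : n ≤ N) :
    LinearIndependent ℝ (fun k : Fin (N - n + 1) => bernsteinP N (n / 2 + (k : ℕ))) ∧
    ∀ q : Polynomial ℝ,
      (q.degree ≤ (N : WithBot ℕ) ∧ trialBC n q) ↔
        q ∈ Submodule.span ℝ (Set.range fun k : Fin (N - n + 1) => bernsteinP N (n / 2 + (k : ℕ))) := by
  have hle : ∀ k : Fin (N - n + 1), n / 2 + (k : ℕ) < N + 1 := fun k => by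
    have := k.isLt; omega
  constructor
  · have hinj : Function.Injective
        (fun k : Fin (N - n + 1) => (⟨n / 2 + (k : ℕ), hle k⟩ : Fin (N + 1))) := by
      intro k l hkl
      have := congrArg Fin.val hkl
      simp only at this
      exact Fin.ext (by omega)
    have h2 := (linIndepFull N).comp
      (fun k : Fin (N - n + 1) => (⟨n / 2 + (k : ℕ), hle k⟩ : Fin (N + 1))) hinj
    have hg : (fun k : Fin (N - n + 1) => bernsteinP N (n / 2 + (k : ℕ)))
        = (fun i : Fin (N + 1) => bernsteinP N i) ∘
          (fun k : Fin (N - n + 1) => (⟨n / 2 + (k : ℕ), hle k⟩ : Fin (N + 1))) := rfl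
    rw [hg]
    exact h2
  · intro q
    constructor
    · rintro ⟨hdeg, hbc⟩
      obtain ⟨c, rfl⟩ := mem_span_full hdeg
      rw [trialBC_iff] at hbc
      have h0 : ∀ i < n / 2, c i = 0 := key0 N (n / 2) (by omega) c hbc.1
      have h1 : ∀ j < (n + 1) / 2, c (N - j) = 0 := key1 N ((n + 1) / 2) (by omega) c hbc.2
      have hsum : ∑ i ∈ Finset.range (N + 1), c i • bernsteinP N i
          = ∑ i ∈ Finset.Icc (n / 2) (N - (n + 1) / 2), c i • bernsteinP N i := by
        refine (Finset.sum_subset (fun i hi => Finset.mem_range.2 ?_) fun i hi hni => ?_).symm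
        · have := (Finset.mem_Icc.1 hi).2; omega
        · rw [Finset.mem_range] at hi
          rw [Finset.mem_Icc] at hni
          rcases Nat.lt_or_ge i (n / 2) with hl | hl
          · rw [h0 i hl, zero_smul]
          · have hgt : N - (n + 1) / 2 < i := by omega
            have := h1 (N - i) (by omega)
            rw [show N - (N - i) = i by omega] at this
            rw [this, zero_smul]
      rw [hsum]
      refine Submodule.sum_mem _ fun i hi => Submodule.smul_mem _ _ (Submodule.subset_span ?_)
      rw [Finset.mem_Icc] at hi
      exact ⟨⟨i - n / 2, by omega⟩, by simp only; congr 1; omega⟩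
    · intro hq
      rw [Submodule.mem_span_range_iff_exists_fun] at hq
      obtain ⟨c, hc⟩ := hq
      rw [← hc]
      have hk : ∀ k : Fin (N - n + 1), n / 2 + (k : ℕ) ≤ N - (n + 1) / 2 := fun k => by
        have := k.isLt; omega
      constructor
      · refine le_trans (Polynomial.degree_sum_le _ _) (Finset.sup_le fun k _ => ?_)
        exact le_trans (degree_smul_le _ _) (bern_degree_le _ _)
      · rw [trialBC_iff]
        constructor
        · intro p hp
          rw [map_sum]
          refine Finset.sum_eq_zero fun k _ => ?_
          rw [map_smul, L0_eq_zero (by omega), smul_zero]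
        · intro p hp
          rw [map_sum]
          refine Finset.sum_eq_zero fun k _ => ?_
          have := hk k
          rw [map_smul, L1_eq_zero (by omega), smul_zero]
end

section
/- Let n < N and for 0 ≤ i ≤ N-n set ψ_i = Σ_{j=0}^n a_{i,j}^n ψ̃_{i+j} with a_{i,j}^n = C(n,j)(i+j+⌊(n+1)/2⌋)!(N-i-j+⌊n/2⌋)!/((i+⌊(n+1)/2⌋)!(N-i+⌊n/2⌋)!). Then for n even and each 0 ≤ p ≤ n/2 - 1, ψ_i^{(p)}(0) = 0; equivalently, the inner sum Σ_{j=0}^n a_{i,j}^n c_{i+j,r} vanishes for all 0 ≤ r ≤ p, where c denotes the dual Bernstein coefficient matrix. -/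
open Finset

/-- The coefficients `a_{i,j}^n` of the modal basis. -/
noncomputable def modalCoeff (N n i j : ℕ) : ℝ :=
  (n.choose j : ℝ) * ((i + j + (n + 1) / 2).factorial : ℝ) * ((N - i - j + n / 2).factorial : ℝ) /
    (((i + (n + 1) / 2).factorial : ℝ) * ((N - i + n / 2).factorial : ℝ))

/-- The `i`-th modal basis function `ψ_i = ∑_{j=0}^n a_{i,j}^n ψ̃_{i+j}`. -/
noncomputable def modalFun (N n i : ℕ) : ℝ → ℝ :=
  fun x => ∑ j ∈ range (n + 1), modalCoeff N n i j * dualBernstein N (i + j) x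

section Aux

open Polynomial fwdDiff

lemma prod_asc' (a k : ℕ) : (∏ t ∈ range k, ((a:ℝ) + 1 + t)) = (a+k).factorial / a.factorial := by
  induction k with
  | zero => simp [div_self (by positivity : ((a.factorial : ℝ)) ≠ 0)]
  | succ k ih =>
    rw [prod_range_succ, ih]
    have : ((a + (k+1)).factorial : ℝ) = (a + k).factorial * ((a:ℝ) + 1 + k) := by
      have h2 : a + (k+1) = (a + k) + 1 := by omega
      rw [h2, Nat.factorial_succ]
      push_cast; ring
    rw [this]
    field_simp

lemma prod_desc' (a : ℕ) : ∀ k, k ≤ a → (∏ t ∈ range k, ((a:ℝ) - t)) = a.factorial / (a-k).factorial := by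
  intro k
  induction k with
  | zero => simp [div_self (by positivity : ((a.factorial : ℝ)) ≠ 0)]
  | succ k ih =>
    intro hk
    rw [prod_range_succ, ih (by omega)]
    have h1 : ((a - k).factorial : ℝ) = (a - (k+1)).factorial * ((a:ℝ) - k) := by
      have h2 : a - k = (a - (k+1)) + 1 := by omega
      rw [h2, Nat.factorial_succ]
      push_cast [Nat.cast_sub (by omega : k+1 ≤ a)]
      ring
    rw [h1]
    have hne : ((a - (k+1)).factorial : ℝ) ≠ 0 := by positivity
    have hne2 : ((a:ℝ) - k) ≠ 0 := by
      have : (k:ℝ) < a := by exact_mod_cast (by omega : k < a)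
      linarith
    field_simp

lemma fwdDiff_poly_eval' (P : Polynomial ℝ) :
    Δ_[1] (fun x : ℝ => P.eval x) = fun x => (P.comp (X + 1) - P).eval x := by
  funext x
  simp [fwdDiff, eval_comp]

lemma fwdDiff_iter_poly' : ∀ (n : ℕ) (P : Polynomial ℝ), P.degree < n →
    (Δ_[(1:ℝ)])^[n] (fun x : ℝ => P.eval x) = fun _ => 0 := by
  intro n
  induction n with
  | zero =>
    intro P hP
    have : P = 0 := by
      rw [← Polynomial.degree_eq_bot]
      exact Nat.WithBot.lt_zero_iff.mp (by exact_mod_cast hP)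
    simp [this]
  | succ n ih =>
    intro P hP
    rw [Function.iterate_succ_apply, fwdDiff_poly_eval']
    apply ih
    rcases eq_or_ne (P.comp (X+1) - P) 0 with hq | hq
    · rw [hq]
      exact lt_of_le_of_lt bot_le (by exact_mod_cast WithBot.bot_lt_coe n)
    rcases eq_or_ne P 0 with h0 | h0
    · exact absurd (by simp [h0]) hq
    have hlc : (P.comp (X + 1)).leadingCoeff = P.leadingCoeff := by
      have h1 : ((X + 1 : Polynomial ℝ)).natDegree = 1 := by
        simpa using Polynomial.natDegree_X_add_C (1:ℝ)
      rw [Polynomial.leadingCoeff_comp (by rw [h1]; norm_num)]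
      have : (X + 1 : Polynomial ℝ).leadingCoeff = 1 := by
        simpa using Polynomial.leadingCoeff_X_add_C (1:ℝ)
      rw [this, one_pow, mul_one]
    have hcomp0 : P.comp (X + 1) ≠ 0 := by
      rw [← Polynomial.leadingCoeff_ne_zero, hlc, Polynomial.leadingCoeff_ne_zero]
      exact h0
    have hdc : (P.comp (X + 1)).degree = P.degree := by
      rw [Polynomial.degree_eq_natDegree hcomp0, Polynomial.degree_eq_natDegree h0,
        Polynomial.natDegree_comp]
      have h1 : ((X + 1 : Polynomial ℝ)).natDegree = 1 := by
        simpa using Polynomial.natDegree_X_add_C (1:ℝ)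
      rw [h1, mul_one]
    have hlt := Polynomial.degree_sub_lt hdc hcomp0 hlc
    rw [hdc] at hlt
    have h1 : (P.comp (X+1) - P).natDegree < P.natDegree :=
      Polynomial.natDegree_lt_natDegree hq hlt
    have h2 : P.natDegree < n + 1 := (Polynomial.natDegree_lt_iff_degree_lt h0).mpr hP
    exact (Polynomial.natDegree_lt_iff_degree_lt hq).mp (by omega)

lemma alt_sum_poly' (n : ℕ) (hn : Even n) (P : Polynomial ℝ) (hP : P.degree < n) (x : ℝ) :
    ∑ j ∈ range (n+1), (-1:ℝ)^j * (n.choose j) * P.eval (x + j) = 0 := by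
  have h := fwdDiff_iter_eq_sum_shift (1:ℝ) (fun y : ℝ => P.eval y) n x
  rw [fwdDiff_iter_poly' n P hP] at h
  have h' : (0:ℝ) = ∑ k ∈ range (n + 1),
      ((-1:ℤ) ^ (n - k) * (n.choose k) : ℤ) • P.eval (x + k • (1:ℝ)) := h
  rw [eq_comm] at h'
  rw [← h']
  apply sum_congr rfl
  intro j hj
  have hjn : j ≤ n := by
    have := mem_range.mp hj; omega
  have hsign : (-1:ℝ)^(n-j) = (-1:ℝ)^j := by
    rcases Nat.even_or_odd j with he | ho
    · rw [he.neg_one_pow, ((Nat.even_sub hjn).mpr (iff_of_true hn he)).neg_one_pow]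
    · rw [ho.neg_one_pow, (Nat.Even.sub_odd hjn hn ho).neg_one_pow]
  rw [zsmul_eq_mul]
  push_cast
  rw [hsign]
  norm_num

lemma key_sum (N n hf s i : ℕ) (hh : n = 2*hf) (hnN : n < N) (hi : i ≤ N - n) (hs : s + 1 ≤ hf) :
    ∑ j ∈ range (n+1), modalCoeff N n i j * ((-1:ℝ)^(i+j) *
      (((N+s+1).choose (N-(i+j)) : ℝ) * ((N-s).choose (N-(i+j)) : ℝ) / (N.choose (i+j) : ℝ))) = 0 := by
  set F1 : Polynomial ℝ := ∏ t ∈ range (hf-(s+1)), (X + C ((s+2+t : ℕ) : ℝ)) with hF1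
  set F2 : Polynomial ℝ := ∏ t ∈ range s, (X - C (t:ℝ)) with hF2
  set F3 : Polynomial ℝ := ∏ t ∈ range hf, (C ((N+1+t : ℕ) : ℝ) - X) with hF3
  set P : Polynomial ℝ := F1 * F2 * F3 with hPdef
  have hdeg : P.degree < n := by
    have d1 : F1.natDegree ≤ hf - (s+1) := by
      refine le_trans (natDegree_prod_le _ _) ?_
      calc ∑ t ∈ range (hf-(s+1)), (X + C ((s+2+t : ℕ) : ℝ)).natDegree
          ≤ ∑ _t ∈ range (hf-(s+1)), 1 := by
            apply sum_le_sum
            intro t _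
            exact le_of_eq (natDegree_X_add_C _)
        _ = hf - (s+1) := by simp
    have d2 : F2.natDegree ≤ s := by
      refine le_trans (natDegree_prod_le _ _) ?_
      calc ∑ t ∈ range s, (X - C (t:ℝ)).natDegree
          ≤ ∑ _t ∈ range s, 1 := by
            apply sum_le_sum
            intro t _
            exact le_of_eq (natDegree_X_sub_C _)
        _ = s := by simp
    have d3 : F3.natDegree ≤ hf := by
      refine le_trans (natDegree_prod_le _ _) ?_
      calc ∑ t ∈ range hf, (C ((N+1+t : ℕ) : ℝ) - X).natDegree
          ≤ ∑ _t ∈ range hf, 1 := by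
            apply sum_le_sum
            intro t _
            have : (C ((N+1+t : ℕ) : ℝ) - X) = -(X - C ((N+1+t : ℕ) : ℝ)) := by ring
            rw [this, natDegree_neg]
            exact le_of_eq (natDegree_X_sub_C _)
        _ = hf := by simp
    have dP : P.natDegree ≤ (hf - (s+1)) + s + hf := by
      rw [hPdef]
      exact le_trans natDegree_mul_le
        (add_le_add (le_trans natDegree_mul_le (add_le_add d1 d2)) d3)
    have dP' : P.natDegree < n := lt_of_le_of_lt dP (by omega)
    calc P.degree ≤ (P.natDegree : WithBot ℕ) := degree_le_natDegree
      _ < (n : WithBot ℕ) := by exact_mod_cast dP'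
  have hzero := alt_sum_poly' n ⟨hf, by omega⟩ P hdeg (i : ℝ)
  set K : ℝ := (-1:ℝ)^i * ((N+s+1).factorial * (N-s).factorial) /
      ((i+hf).factorial * ((N-i+hf).factorial) * N.factorial) with hK
  have main : ∀ j ∈ range (n+1),
      modalCoeff N n i j * ((-1:ℝ)^(i+j) *
        (((N+s+1).choose (N-(i+j)) : ℝ) * ((N-s).choose (N-(i+j)) : ℝ) / (N.choose (i+j) : ℝ)))
      = K * ((-1:ℝ)^j * (n.choose j) * P.eval ((i:ℝ) + j)) := by
    intro j hj
    have hjn : j ≤ n := by have := mem_range.mp hj; omega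
    set m := i + j with hm
    have hmN : m ≤ N := by omega
    have hcast : ((i:ℝ) + j) = ((m:ℕ):ℝ) := by push_cast [hm]; ring
    have e1 : i + j + (n+1)/2 = m + hf := by omega
    have e2 : N - i - j + n/2 = (N - m) + hf := by omega
    have e3 : i + (n+1)/2 = i + hf := by omega
    have e4 : N - i + n/2 = (N - i) + hf := by omega
    rw [modalCoeff, e1, e2, e3, e4]
    rcases lt_or_ge m s with hms | hms
    · have hc2 : (N-s).choose (N-m) = 0 := Nat.choose_eq_zero_of_lt (by omega)
      have hPz : P.eval ((i:ℝ) + j) = 0 := by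
        rw [hcast, hPdef, eval_mul, eval_mul]
        have : F2.eval ((m:ℕ):ℝ) = 0 := by
          rw [hF2, eval_prod]
          apply Finset.prod_eq_zero (mem_range.mpr hms)
          simp
        rw [this]; ring
      rw [hc2, hPz]
      push_cast
      ring
    · have hC1 : (((N+s+1).choose (N-m)) : ℝ)
          = ((N+s+1).factorial : ℝ) / (((N-m).factorial : ℝ) * ((m+s+1).factorial : ℝ)) := by
        rw [Nat.cast_choose ℝ (by omega : N - m ≤ N+s+1)]
        have e : N+s+1-(N-m) = m+s+1 := by omega
        rw [e]
      have hC2 : (((N-s).choose (N-m)) : ℝ)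
          = ((N-s).factorial : ℝ) / (((N-m).factorial : ℝ) * ((m-s).factorial : ℝ)) := by
        rw [Nat.cast_choose ℝ (by omega : N - m ≤ N-s)]
        have e : N-s-(N-m) = m-s := by omega
        rw [e]
      have hCN : ((N.choose m) : ℝ)
          = (N.factorial : ℝ) / ((m.factorial : ℝ) * ((N-m).factorial : ℝ)) := by
        rw [Nat.cast_choose ℝ hmN]
      have hPeval : P.eval ((i:ℝ) + j)
          = (((m+hf).factorial : ℝ) / ((m+s+1).factorial : ℝ))
            * ((m.factorial : ℝ) / ((m-s).factorial : ℝ))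
            * (((N-m+hf).factorial : ℝ) / ((N-m).factorial : ℝ)) := by
        rw [hcast, hPdef, eval_mul, eval_mul]
        have hev1 : F1.eval ((m:ℕ):ℝ) = ((m+hf).factorial : ℝ) / ((m+s+1).factorial : ℝ) := by
          rw [hF1, eval_prod]
          have : ∀ t ∈ range (hf-(s+1)),
              (X + C ((s+2+t : ℕ) : ℝ)).eval ((m:ℕ):ℝ) = ((m+s+1:ℕ):ℝ) + 1 + t := by
            intro t _
            simp only [eval_add, eval_X, eval_C]
            push_cast
            ring
          rw [Finset.prod_congr rfl this, prod_asc' (m+s+1) (hf-(s+1))]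
          have e : m+s+1+(hf-(s+1)) = m+hf := by omega
          rw [e]
        have hev2 : F2.eval ((m:ℕ):ℝ) = (m.factorial : ℝ) / ((m-s).factorial : ℝ) := by
          rw [hF2, eval_prod]
          have : ∀ t ∈ range s, (X - C (t:ℝ)).eval ((m:ℕ):ℝ) = (m:ℝ) - t := by
            intro t _
            simp
          rw [Finset.prod_congr rfl this, prod_desc' m s hms]
        have hev3 : F3.eval ((m:ℕ):ℝ) = ((N-m+hf).factorial : ℝ) / ((N-m).factorial : ℝ) := by
          rw [hF3, eval_prod]
          have : ∀ t ∈ range hf,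
              (C ((N+1+t : ℕ) : ℝ) - X).eval ((m:ℕ):ℝ) = ((N-m:ℕ):ℝ) + 1 + t := by
            intro t _
            simp only [eval_sub, eval_X, eval_C]
            push_cast [Nat.cast_sub hmN]
            ring
          rw [Finset.prod_congr rfl this, prod_asc' (N-m) hf]
        rw [hev1, hev2, hev3]
      rw [hC1, hC2, hCN, hPeval, hK, pow_add]
      have n1 : ((N+s+1).factorial : ℝ) ≠ 0 := by positivity
      have n2 : ((N-s).factorial : ℝ) ≠ 0 := by positivity
      have n3 : ((N-m).factorial : ℝ) ≠ 0 := by positivity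
      have n4 : ((m+s+1).factorial : ℝ) ≠ 0 := by positivity
      have n5 : ((m-s).factorial : ℝ) ≠ 0 := by positivity
      have n6 : (N.factorial : ℝ) ≠ 0 := by positivity
      have n7 : ((m.factorial) : ℝ) ≠ 0 := by positivity
      have n8 : (((i+hf).factorial) : ℝ) ≠ 0 := by positivity
      have n9 : (((N-i+hf).factorial) : ℝ) ≠ 0 := by positivity
      have n10 : (((m+hf).factorial) : ℝ) ≠ 0 := by positivity
      have n11 : (((N-m+hf).factorial) : ℝ) ≠ 0 := by positivity
      field_simp
  rw [Finset.sum_congr rfl main, ← Finset.mul_sum, hzero, mul_zero]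

lemma dualCoeff_ext (N m r : ℕ) (hr : r ≤ N) :
    dualCoeff N m r = ((-1:ℝ)^(m+r) / ((N.choose m : ℝ) * (N.choose r : ℝ))) *
      ∑ s ∈ range (r+1),
        (2 * (s : ℝ) + 1) * ((N + s + 1).choose (N - m) : ℝ) * ((N - s).choose (N - m) : ℝ) *
          ((N + s + 1).choose (N - r) : ℝ) * ((N - s).choose (N - r) : ℝ) := by
  rw [dualCoeff]
  congr 1
  apply Finset.sum_subset
  · intro x hx
    simp only [mem_range] at *
    omega
  · intro x hx hnx
    simp only [mem_range] at hx hnx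
    have hz : ((N-x).choose (N-m)) = 0 := Nat.choose_eq_zero_of_lt (by omega)
    rw [hz]
    push_cast
    ring

lemma iteratedDeriv_polyEval_s17 (Q : Polynomial ℝ) :
    ∀ p : ℕ, iteratedDeriv p (fun x => Q.eval x) = fun x => ((derivative)^[p] Q).eval x := by
  intro p
  induction p with
  | zero => simp
  | succ p ih =>
    rw [iteratedDeriv_succ, ih]
    funext x
    rw [Function.iterate_succ_apply']
    exact Polynomial.deriv _

end Aux

theorem modal_vanishing_derivs_even (N n i p : ℕ) (hn : n < N) (hne : Even n)
    (hi : i ≤ N - n) (hp : 2 * p + 2 ≤ n) :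
    iteratedDeriv p (modalFun N n i) 0 = 0 ∧
    ∀ r ≤ p, ∑ j ∈ range (n + 1), modalCoeff N n i j * dualCoeff N (i + j) r = 0 := by
  classical
  obtain ⟨hf, hhf⟩ := hne
  have hh : n = 2 * hf := by omega
  -- Part 2
  have part2 : ∀ r ≤ p, ∑ j ∈ range (n + 1), modalCoeff N n i j * dualCoeff N (i + j) r = 0 := by
    intro r hr
    have hrN : r ≤ N := by omega
    have step1 : ∀ j ∈ range (n+1),
        modalCoeff N n i j * dualCoeff N (i+j) r
        = ∑ s ∈ range (r+1),
            (((-1:ℝ)^r * (2*(s:ℝ)+1) * ((N+s+1).choose (N-r) : ℝ) * ((N-s).choose (N-r) : ℝ)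
              / (N.choose r : ℝ)) *
            (modalCoeff N n i j * ((-1:ℝ)^(i+j) *
              (((N+s+1).choose (N-(i+j)) : ℝ) * ((N-s).choose (N-(i+j)) : ℝ)
                / (N.choose (i+j) : ℝ))))) := by
      intro j hj
      rw [dualCoeff_ext N (i+j) r hrN, Finset.mul_sum, Finset.mul_sum]
      apply Finset.sum_congr rfl
      intro s _
      rw [pow_add]
      ring
    rw [Finset.sum_congr rfl step1, Finset.sum_comm]
    apply Finset.sum_eq_zero
    intro s hs
    have hs' : s ≤ r := by have := mem_range.mp hs; omega
    have hkey := key_sum N n hf s i hh hn hi (by omega)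
    rw [← Finset.mul_sum, hkey, mul_zero]
  refine ⟨?_, part2⟩
  -- Part 1
  set bernP : ℕ → Polynomial ℝ := fun k =>
    Polynomial.C ((N.choose k : ℕ) : ℝ) * Polynomial.X ^ k
      * (1 - Polynomial.X) ^ (N - k) with hbernP
  set Q : Polynomial ℝ := ∑ j ∈ range (n+1), ∑ k ∈ range (N+1),
    Polynomial.C (modalCoeff N n i j * dualCoeff N (i+j) k) * bernP k with hQ
  have hfun : modalFun N n i = fun x => Q.eval x := by
    funext x
    simp only [modalFun, dualBernstein, bernstein', hQ, hbernP, Polynomial.eval_finset_sum,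
      Polynomial.eval_mul, Polynomial.eval_pow, Polynomial.eval_sub, Polynomial.eval_one,
      Polynomial.eval_C, Polynomial.eval_X]
    apply Finset.sum_congr rfl
    intro j _
    rw [Finset.mul_sum]
    apply Finset.sum_congr rfl
    intro k _
    ring
  rw [hfun, iteratedDeriv_polyEval_s17 Q p]
  show Polynomial.eval 0 ((Polynomial.derivative)^[p] Q) = 0
  have hcoeff0 : ((Polynomial.derivative)^[p] Q).eval 0 = ((Polynomial.derivative)^[p] Q).coeff 0 :=
    (Polynomial.coeff_zero_eq_eval_zero _).symm
  rw [hcoeff0, Polynomial.coeff_iterate_derivative]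
  have hQcoeff : Q.coeff p = 0 := by
    rw [hQ, Polynomial.finset_sum_coeff]
    have : ∀ j ∈ range (n+1), (∑ k ∈ range (N+1),
        Polynomial.C (modalCoeff N n i j * dualCoeff N (i+j) k) * bernP k).coeff p
        = ∑ k ∈ range (N+1), modalCoeff N n i j * dualCoeff N (i+j) k * (bernP k).coeff p := by
      intro j _
      rw [Polynomial.finset_sum_coeff]
      apply Finset.sum_congr rfl
      intro k _
      rw [Polynomial.coeff_C_mul]
    rw [Finset.sum_congr rfl this, Finset.sum_comm]
    apply Finset.sum_eq_zero
    intro k hk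
    rcases le_or_gt k p with hkp | hkp
    · have := part2 k hkp
      calc ∑ j ∈ range (n+1),
            modalCoeff N n i j * dualCoeff N (i+j) k * (bernP k).coeff p
          = (∑ j ∈ range (n+1), modalCoeff N n i j * dualCoeff N (i+j) k) * (bernP k).coeff p := by
            rw [Finset.sum_mul]
        _ = 0 := by rw [this, zero_mul]
    · have hbz : (bernP k).coeff p = 0 := by
        have hre : bernP k = (Polynomial.C ((N.choose k : ℕ) : ℝ)
            * (1 - Polynomial.X) ^ (N - k)) * Polynomial.X ^ k := by
          rw [hbernP]; ring
        rw [hre, Polynomial.coeff_mul_X_pow']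
        simp [Nat.not_le.mpr hkp]
      apply Finset.sum_eq_zero
      intro j _
      rw [hbz, mul_zero]
  rw [Nat.zero_add p, hQcoeff]
  simp
end
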